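/- Let ρ = 1.861 and let ψ, φ ≥ 0. Then for any α with 0.5 ≤ α ≤ 1.26, we have 2ψ + φ + max(2, 1/α)·(ρ·ψ + α·ρ·φ) ≤ (2ρ + 2)·(ψ + φ), i.e., the bound is at most 5.722·(ψ + φ). -/
import Mathlib

theorem stmt_4 (ψ φ α : ℝ) (hψ : 0 ≤ ψ) (hφ : 0 ≤ φ)
    (hα1 : 0.5 ≤ α) (hα2 : α ≤ 1.26) :
    2 * ψ + φ + max 2 (1 / α) * ((1.861 : ℝ) * ψ + α * 1.861 * φ)
      ≤ (2 * 1.861 + 2) * (ψ + φ) := by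
  have hα0 : (0:ℝ) < α := by linarith
  have hmax : max 2 (1 / α) = 2 := by
    rw [max_eq_left]
    rw [div_le_iff₀ hα0]; linarith
  rw [hmax]
  nlinarith [mul_nonneg hφ (by linarith : (0:ℝ) ≤ 1.26 - α)]
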